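/- arXiv:1112.0934 — 3 statements merged into one kernel-verified Lean document; each statement's English description precedes it below -/
import Mathlib

section
/- Let a,b>0 and let (δ_n) satisfy δ_{n+1} = (1 - (a+b)/n + ε_n)·δ_n with |ε_n| ≤ C/n². Then δ_n = O(n^{-(a+b)}): there exists K such that |δ_n| ≤ K·n^{-(a+b)} for all n ≥ n₀. -/
lemma stmt4_aux (s C A : ℝ) (hs : 0 < s) (hC : 0 < C)
    (hA1 : 1 ≤ A) (hsA : 2*s ≤ A) (hCA : 2*C ≤ A) :
    (1 - s/A + C/A^2) * ((A+1)/A)^s ≤ Real.exp (4*C/(A*(A+1))) := by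
  have hA : 0 < A := lt_of_lt_of_le one_pos hA1
  have hB : 0 < A + 1 := by linarith
  have hlog : Real.log ((A+1)/A) ≤ 1/A := by
    have h := Real.log_le_sub_one_of_pos (show 0 < (A+1)/A by positivity)
    have h2 : (A+1)/A - 1 = 1/A := by field_simp; ring
    linarith
  have h1 : ((A+1)/A)^s ≤ Real.exp (s/A) := by
    rw [Real.rpow_def_of_pos (by positivity)]
    apply Real.exp_le_exp.2
    calc Real.log ((A+1)/A) * s ≤ (1/A) * s := mul_le_mul_of_nonneg_right hlog hs.le
      _ = s/A := by ring
  have hE := Real.exp_pos (s/A)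
  have h2 : (1 - s/A) * Real.exp (s/A) ≤ 1 := by
    have h := Real.add_one_le_exp (-(s/A))
    rw [Real.exp_neg] at h
    have h' : (1 - s/A) ≤ (Real.exp (s/A))⁻¹ := by linarith
    calc (1 - s/A) * Real.exp (s/A) ≤ (Real.exp (s/A))⁻¹ * Real.exp (s/A) :=
          mul_le_mul_of_nonneg_right h' hE.le
      _ = 1 := inv_mul_cancel₀ (ne_of_gt hE)
  have hhalf : s/A ≤ 1/2 := by rw [div_le_div_iff₀ hA two_pos]; linarith
  have h3 : Real.exp (s/A) ≤ 2 := by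
    have e1 : Real.exp (1/2:ℝ) * Real.exp (1/2:ℝ) = Real.exp 1 := by
      rw [← Real.exp_add]; norm_num
    have h4 : Real.exp (1/2:ℝ) < 2 := by
      nlinarith [Real.exp_pos (1/2:ℝ), Real.exp_one_lt_d9]
    calc Real.exp (s/A) ≤ Real.exp (1/2:ℝ) := Real.exp_le_exp.2 hhalf
      _ ≤ 2 := h4.le
  have hCA2 : 0 < C/A^2 := by positivity
  have hpos : 0 ≤ 1 - s/A + C/A^2 := by linarith
  calc (1 - s/A + C/A^2) * ((A+1)/A)^s
      ≤ (1 - s/A + C/A^2) * Real.exp (s/A) := mul_le_mul_of_nonneg_left h1 hpos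
    _ = (1 - s/A) * Real.exp (s/A) + (C/A^2) * Real.exp (s/A) := by ring
    _ ≤ 1 + (C/A^2) * 2 := by
        have := mul_le_mul_of_nonneg_left h3 hCA2.le
        linarith
    _ ≤ 1 + 4*C/(A*(A+1)) := by
        have h5 : (C/A^2)*2 ≤ 4*C/(A*(A+1)) := by
          rw [div_mul_eq_mul_div, div_le_div_iff₀ (by positivity) (by positivity)]
          nlinarith [mul_nonneg (mul_pos hC hA).le (by linarith : (0:ℝ) ≤ A - 1)]
        linarith
    _ ≤ Real.exp (4*C/(A*(A+1))) := by
        have := Real.add_one_le_exp (4*C/(A*(A+1)))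
        linarith

theorem stmt_4 (a b C : ℝ) (ha : 0 < a) (hb : 0 < b) (hC : 0 < C)
    (n₀ : ℕ) (hn₀ : 1 ≤ n₀) (δ ε : ℕ → ℝ)
    (hrec : ∀ n, n₀ ≤ n → δ (n + 1) = (1 - (a + b) / n + ε n) * δ n)
    (hε : ∀ n, n₀ ≤ n → |ε n| ≤ C / (n : ℝ) ^ 2) :
    ∃ K : ℝ, ∀ n, n₀ ≤ n → |δ n| ≤ K * (n : ℝ) ^ (-(a + b)) := by
  set s := a + b with hs
  have hspos : 0 < s := by positivity
  set N : ℕ := n₀ + 2 + ⌈2*s⌉₊ + ⌈2*C⌉₊ with hNdef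
  have hNn₀ : n₀ ≤ N := by omega
  have hN1 : (1:ℝ) ≤ (N:ℝ) := by
    have h : 1 ≤ N := by omega
    exact_mod_cast h
  have hNs : 2*s ≤ (N:ℝ) := by
    calc 2*s ≤ (⌈2*s⌉₊ : ℝ) := Nat.le_ceil _
      _ ≤ (N:ℝ) := by exact_mod_cast (by omega : ⌈2*s⌉₊ ≤ N)
  have hNC : 2*C ≤ (N:ℝ) := by
    calc 2*C ≤ (⌈2*C⌉₊ : ℝ) := Nat.le_ceil _
      _ ≤ (N:ℝ) := by exact_mod_cast (by omega : ⌈2*C⌉₊ ≤ N)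
  set K₁ : ℝ := |δ N| * (N:ℝ)^s * Real.exp (4*C/(N:ℝ)) with hK₁
  have hNpos : (0:ℝ) < (N:ℝ) := by linarith
  have hK₁0 : 0 ≤ K₁ := by positivity
  have main : ∀ n, N ≤ n → |δ n| ≤ K₁ * (n:ℝ)^(-s) * Real.exp (-(4*C/(n:ℝ))) := by
    intro n hn
    induction n, hn using Nat.le_induction with
    | base =>
      have e1 : (N:ℝ)^s * (N:ℝ)^(-s) = 1 := by
        rw [← Real.rpow_add hNpos]; simp
      have e2 : Real.exp (4*C/(N:ℝ)) * Real.exp (-(4*C/(N:ℝ))) = 1 := by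
        rw [← Real.exp_add]; simp
      have heq : K₁ * (N:ℝ)^(-s) * Real.exp (-(4*C/(N:ℝ))) = |δ N| := by
        rw [hK₁]
        linear_combination |δ N| * Real.exp (4*C/(N:ℝ)) * Real.exp (-(4*C/(N:ℝ))) * e1 +
          |δ N| * e2
      exact heq.ge
    | succ n hn ih =>
      have hA1 : (1:ℝ) ≤ (n:ℝ) := le_trans hN1 (by exact_mod_cast hn)
      have hA : (0:ℝ) < (n:ℝ) := by linarith
      have hB : (0:ℝ) < (n:ℝ) + 1 := by linarith
      have hsA : 2*s ≤ (n:ℝ) := le_trans hNs (by exact_mod_cast hn)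
      have hCA : 2*C ≤ (n:ℝ) := le_trans hNC (by exact_mod_cast hn)
      have hεn := hε n (le_trans hNn₀ hn)
      have hrecn := hrec n (le_trans hNn₀ hn)
      have hhalfs : s/(n:ℝ) ≤ 1/2 := by rw [div_le_div_iff₀ hA two_pos]; linarith
      have hCpos : (0:ℝ) < C/(n:ℝ)^2 := by positivity
      have habs : |1 - s/(n:ℝ) + ε n| ≤ 1 - s/(n:ℝ) + C/(n:ℝ)^2 := by
        have h := abs_le.1 hεn
        rw [abs_le]
        constructor
        · linarith [h.1]
        · linarith [h.2]
      have key := stmt4_aux s C (n:ℝ) hspos hC hA1 hsA hCA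
      have hcast : ((n+1:ℕ):ℝ) = (n:ℝ) + 1 := by push_cast; ring
      have hsne : ((n:ℝ))^s ≠ 0 := ne_of_gt (Real.rpow_pos_of_pos hA _)
      have hsne' : ((n:ℝ)+1)^s ≠ 0 := ne_of_gt (Real.rpow_pos_of_pos hB _)
      have e1 : (((n:ℝ)+1)/(n:ℝ))^s * ((n:ℝ)+1)^(-s) = (n:ℝ)^(-s) := by
        rw [Real.div_rpow hB.le hA.le, Real.rpow_neg hB.le, Real.rpow_neg hA.le]
        field_simp
      have hKpos' : 0 ≤ K₁ * ((n:ℝ)+1)^(-s) * Real.exp (-(4*C/(n:ℝ))) := by positivity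
      have hstep : |δ (n+1)| ≤ K₁ * ((n:ℝ)+1)^(-s) * Real.exp (-(4*C/((n:ℝ)+1))) := by
        calc |δ (n+1)| = |1 - s/(n:ℝ) + ε n| * |δ n| := by rw [hrecn, abs_mul]
          _ ≤ (1 - s/(n:ℝ) + C/(n:ℝ)^2) * |δ n| :=
              mul_le_mul_of_nonneg_right habs (abs_nonneg _)
          _ ≤ (1 - s/(n:ℝ) + C/(n:ℝ)^2) *
              (K₁ * (n:ℝ)^(-s) * Real.exp (-(4*C/(n:ℝ)))) :=
              mul_le_mul_of_nonneg_left ih (by linarith)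
          _ = ((1 - s/(n:ℝ) + C/(n:ℝ)^2) * (((n:ℝ)+1)/(n:ℝ))^s) *
              (K₁ * ((n:ℝ)+1)^(-s) * Real.exp (-(4*C/(n:ℝ)))) := by
              rw [← e1]; ring
          _ ≤ Real.exp (4*C/((n:ℝ)*((n:ℝ)+1))) *
              (K₁ * ((n:ℝ)+1)^(-s) * Real.exp (-(4*C/(n:ℝ)))) :=
              mul_le_mul_of_nonneg_right key hKpos'
          _ = K₁ * ((n:ℝ)+1)^(-s) *
              (Real.exp (4*C/((n:ℝ)*((n:ℝ)+1))) * Real.exp (-(4*C/(n:ℝ)))) := by ring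
          _ = K₁ * ((n:ℝ)+1)^(-s) * Real.exp (-(4*C/((n:ℝ)+1))) := by
              rw [← Real.exp_add]
              congr 2
              field_simp
              ring
      calc |δ (n+1)| ≤ K₁ * ((n:ℝ)+1)^(-s) * Real.exp (-(4*C/((n:ℝ)+1))) := hstep
        _ = K₁ * ((n+1:ℕ):ℝ)^(-s) * Real.exp (-(4*C/((n+1:ℕ):ℝ))) := by rw [hcast]
  set S : ℝ := ∑ k ∈ Finset.range (N+1), |δ k| * (k:ℝ)^s with hS
  have hS0 : 0 ≤ S := Finset.sum_nonneg (fun k _ => by positivity)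
  refine ⟨K₁ + S, ?_⟩
  intro n hn
  have hn1 : (1:ℝ) ≤ (n:ℝ) := by
    have h : 1 ≤ n := le_trans hn₀ hn
    exact_mod_cast h
  have hnpos : (0:ℝ) < (n:ℝ) := by linarith
  have hpow : 0 < (n:ℝ)^(-s) := Real.rpow_pos_of_pos hnpos _
  rcases le_or_gt N n with h | h
  · have hmain := main n h
    have hexp : Real.exp (-(4*C/(n:ℝ))) ≤ 1 := by
      have h0 : 0 ≤ 4*C/(n:ℝ) := by positivity
      calc Real.exp (-(4*C/(n:ℝ))) ≤ Real.exp 0 := Real.exp_le_exp.2 (by linarith)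
        _ = 1 := Real.exp_zero
    calc |δ n| ≤ K₁ * (n:ℝ)^(-s) * Real.exp (-(4*C/(n:ℝ))) := hmain
      _ ≤ K₁ * (n:ℝ)^(-s) * 1 :=
          mul_le_mul_of_nonneg_left hexp (by positivity)
      _ = K₁ * (n:ℝ)^(-s) := by ring
      _ ≤ (K₁ + S) * (n:ℝ)^(-s) := mul_le_mul_of_nonneg_right (by linarith) hpow.le
  · have hmem : n ∈ Finset.range (N+1) := Finset.mem_range.2 (by omega)
    have hterm : |δ n| * (n:ℝ)^s ≤ S :=
      Finset.single_le_sum (f := fun k => |δ k| * (k:ℝ)^s) (fun k _ => by positivity) hmem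
    have e1 : (n:ℝ)^s * (n:ℝ)^(-s) = 1 := by
      rw [← Real.rpow_add hnpos]; simp
    calc |δ n| = (|δ n| * (n:ℝ)^s) * (n:ℝ)^(-s) := by rw [mul_assoc, e1, mul_one]
      _ ≤ S * (n:ℝ)^(-s) := mul_le_mul_of_nonneg_right hterm hpow.le
      _ ≤ (K₁ + S) * (n:ℝ)^(-s) := mul_le_mul_of_nonneg_right (by linarith) hpow.le
end

section
/- Let 0<p<1, 0<q<1, and consider the time-inhomogeneous Markov chain (Y_n) on states {1,0} with transition matrix A_n having P(1→1)=p_M(n) = (p(1-q)n+pq)/(1-p-q+2pq+p(1-q)n) and P(0→0)=p_m(n) = (p(1-q)n+pq-p-q+1)/(1-p-q+2pq+p(1-q)n). Then for any initial distribution, lim_{n→∞} P(Y_n = 1) = pq/(1-p-q+2pq). -/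
theorem stmt_5 (p q : ℝ) (hp : 0 < p) (hp1 : p < 1) (hq : 0 < q) (hq1 : q < 1)
    (pM pm : ℕ → ℝ)
    (hpM : ∀ n : ℕ, pM n =
      (p * (1 - q) * n + p * q) / (1 - p - q + 2 * p * q + p * (1 - q) * n))
    (hpm : ∀ n : ℕ, pm n =
      (p * (1 - q) * n + p * q - p - q + 1) / (1 - p - q + 2 * p * q + p * (1 - q) * n))
    (pin : ℕ → ℝ) (h0 : 0 ≤ pin 1) (h1 : pin 1 ≤ 1)
    (hrec : ∀ n, 1 ≤ n → pin (n + 1) = pin n * pM n + (1 - pin n) * (1 - pm n)) :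
    Filter.Tendsto pin Filter.atTop (nhds (p * q / (1 - p - q + 2 * p * q))) := by
  set c : ℝ := 1 - p - q + 2 * p * q with hc
  set a : ℝ := p * (1 - q) with ha
  have hcpos : 0 < c := by
    have h1 : 0 < (1 - p) * (1 - q) := mul_pos (by linarith) (by linarith)
    have h2 : 0 < p * q := mul_pos hp hq
    rw [hc]; nlinarith
  have hapos : 0 < a := mul_pos hp (by linarith)
  set L : ℝ := p * q / c with hL
  set δ : ℝ := c / a with hδ
  have hδpos : 0 < δ := by positivity
  set ε : ℝ := min δ 1 with hε
  have hεpos : 0 < ε := lt_min hδpos one_pos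
  have hε1 : ε ≤ 1 := min_le_right _ _
  have hεδ : ε ≤ δ := min_le_left _ _
  -- key recurrence
  have key : ∀ n : ℕ, 1 ≤ n →
      pin (n + 1) - L = (pin n - L) * (a * n / (c + a * n)) := by
    intro n hn
    have hD : (0:ℝ) < c + a * n := by positivity
    rw [hrec n hn, hpM n, hpm n, hL]
    field_simp
    ring
  -- bound: |pin n - L| ≤ |pin 1 - L| * n ^ (-ε)
  have bound : ∀ n : ℕ, 1 ≤ n →
      |pin n - L| ≤ |pin 1 - L| * (n:ℝ) ^ (-ε) := by
    intro n hn
    induction n, hn using Nat.le_induction with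
    | base => simp
    | succ n hn ih =>
      have hnpos : (0:ℝ) < n := by exact_mod_cast hn
      have hD : (0:ℝ) < c + a * n := by positivity
      have hfrac : a * n / (c + a * n) ≤ ((n:ℝ) / (n + 1)) ^ ε := by
        have h1 : ((n + 1 : ℝ) / n) ^ ε ≤ (n + δ) / n := by
          have he : ((n + 1 : ℝ) / n) = 1 + 1 / n := by field_simp
          rw [he]
          have hb := rpow_one_add_le_one_add_mul_self
            (s := 1 / (n:ℝ)) (le_trans (by norm_num) (by positivity : (0:ℝ) ≤ 1/(n:ℝ))) hεpos.le hε1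
          calc ((1:ℝ) + 1 / n) ^ ε ≤ 1 + ε * (1 / n) := hb
            _ ≤ 1 + δ * (1 / n) := by
                have : ε * (1 / (n:ℝ)) ≤ δ * (1 / n) :=
                  mul_le_mul_of_nonneg_right hεδ (by positivity)
                linarith
            _ = ((n:ℝ) + δ) / n := by field_simp
        have h2 : a * n / (c + a * n) = (n:ℝ) / (n + δ) := by
          rw [hδ]; field_simp; ring
        rw [h2]
        have h3 : ((n:ℝ) / (n + 1)) ^ ε = (((n + 1 : ℝ) / n) ^ ε)⁻¹ := by
          rw [← Real.inv_rpow (by positivity)]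
          congr 1
          field_simp
        have h4 : (n:ℝ) / (n + δ) = (((n:ℝ) + δ) / n)⁻¹ := by
          field_simp
        rw [h3, h4]
        exact inv_anti₀ (by positivity) h1
      have habs : |pin (n + 1) - L| = |pin n - L| * (a * n / (c + a * n)) := by
        have hfr : 0 < a * n / (c + a * n) := div_pos (mul_pos hapos hnpos) hD
        rw [key n hn, abs_mul, abs_of_pos hfr]
      have hrp : (0:ℝ) ≤ ((n:ℝ) / (n + 1)) ^ ε := by positivity
      calc |pin (n + 1) - L| = |pin n - L| * (a * n / (c + a * n)) := habs
        _ ≤ (|pin 1 - L| * (n:ℝ) ^ (-ε)) * (((n:ℝ) / (n + 1)) ^ ε) := by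
            apply mul_le_mul ih hfrac (by positivity)
            positivity
        _ = |pin 1 - L| * ((n:ℝ) + 1) ^ (-ε) := by
            have h6 : (0:ℝ) < (n:ℝ) ^ ε := Real.rpow_pos_of_pos hnpos ε
            have h7 : (0:ℝ) < ((n:ℝ) + 1) ^ ε := Real.rpow_pos_of_pos (by positivity) ε
            have h5 : ((n:ℝ)) ^ (-ε) * (((n:ℝ) / (n + 1)) ^ ε) = ((n:ℝ) + 1) ^ (-ε) := by
              rw [Real.div_rpow hnpos.le (by positivity), Real.rpow_neg hnpos.le,
                Real.rpow_neg (by positivity : (0:ℝ) ≤ (n:ℝ) + 1)]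
              field_simp
            rw [mul_assoc, h5]
        _ = |pin 1 - L| * (((n:ℕ) + 1 : ℕ) : ℝ) ^ (-ε) := by norm_cast
  -- conclude
  have htend0 : Filter.Tendsto (fun n : ℕ => |pin 1 - L| * (n:ℝ) ^ (-ε))
      Filter.atTop (nhds 0) := by
    have h := (tendsto_rpow_neg_atTop hεpos).comp (tendsto_natCast_atTop_atTop (R := ℝ))
    simpa using h.const_mul (|pin 1 - L|)
  have hsub : Filter.Tendsto (fun n => pin n - L) Filter.atTop (nhds 0) := by
    apply squeeze_zero_norm' _ htend0
    filter_upwards [Filter.eventually_ge_atTop 1] with n hn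
    exact bound n hn
  have := hsub.add (tendsto_const_nhds (x := L))
  simpa using this
end

section
/- Let (X_n) be the finite-memory perturbed walk on ℤ with L ≥ 1 and p + q = 1, p, q ∈ (0,1). Then (X_n) is recurrent: almost surely there exists k ∈ ℤ visited infinitely often, and in fact X_n = X_0 for infinitely many n almost surely. The proof structure: by the flip symmetry, P(X_n → +∞) = P(X_n → -∞); the event {X_n → +∞} is a tail event, so by a zero-one law these probabilities are each 0 or 1, hence both 0; thus some level is visited infinitely often, and from any level the walk returns to the start with probability bounded below. -/
open scoped Classical
open MeasureTheory Filter

/-- `h n` is an `L`-step local maximum of the trajectory `h` at time `n`. -/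
def LocMaxAt (L : ℕ) (h : ℕ → ℤ) (n : ℕ) : Prop := ∀ m, m ≤ min L n → h (n - m) ≤ h n

/-- `h n` is an `L`-step local minimum of the trajectory `h` at time `n`. -/
def LocMinAt (L : ℕ) (h : ℕ → ℤ) (n : ℕ) : Prop := ∀ m, m ≤ min L n → h n ≤ h (n - m)

/-- Probability that the perturbed walk steps `+1` at time `n` given past trajectory `h`:
`p` at an `L`-step local maximum, `q` at an `L`-step local minimum, `½` otherwise
(and `½` if it is both a maximum and a minimum). -/
noncomputable def stepPr (L : ℕ) (p q : ℝ) (h : ℕ → ℤ) (n : ℕ) : ℝ :=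
  if LocMaxAt L h n ∧ LocMinAt L h n then 1 / 2
  else if LocMaxAt L h n then p
  else if LocMinAt L h n then q
  else 1 / 2

noncomputable section Walk

variable (L : ℕ) (p : ℝ)

/-- value of a boolean step -/
def bval (b : Bool) : ℤ := if b then 1 else -1

/-- sum of the last `m` increments of the window `w`. -/
def wsum (w : Fin L → Bool) (m : ℕ) : ℤ :=
  ∑ i : Fin L, if L - m ≤ (i : ℕ) then bval (w i) else 0

def wMax (w : Fin L → Bool) : Prop := ∀ m ≤ L, 0 ≤ wsum L w m
def wMin (w : Fin L → Bool) : Prop := ∀ m ≤ L, wsum L w m ≤ 0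

/-- one-step up probability as a function of the window -/
def sfun (w : Fin L → Bool) : ℝ :=
  if wMax L w ∧ wMin L w then 1/2 else if wMax L w then p else if wMin L w then 1 - p else 1/2

def wflip (w : Fin L → Bool) : Fin L → Bool := fun i => !(w i)

def wpush (w : Fin L → Bool) (b : Bool) : Fin L → Bool :=
  fun i => if h : (i : ℕ) + 1 < L then w ⟨(i : ℕ) + 1, h⟩ else b

lemma bval_not (b : Bool) : bval (!b) = - bval b := by cases b <;> simp [bval]

lemma wsum_flip (w : Fin L → Bool) (m : ℕ) : wsum L (wflip L w) m = - wsum L w m := by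
  simp only [wsum, wflip, bval_not, ← Finset.sum_neg_distrib]
  exact Finset.sum_congr rfl (by intro i _; split <;> simp)

lemma wMax_flip (w : Fin L → Bool) : wMax L (wflip L w) ↔ wMin L w := by
  constructor <;> intro h m hm <;> have := h m hm <;> rw [wsum_flip] at * <;> omega

lemma wMin_flip (w : Fin L → Bool) : wMin L (wflip L w) ↔ wMax L w := by
  constructor <;> intro h m hm <;> have := h m hm <;> rw [wsum_flip] at * <;> omega

lemma sfun_flip (w : Fin L → Bool) : sfun L p (wflip L w) = 1 - sfun L p w := by
  unfold sfun
  rw [wMax_flip, wMin_flip]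
  by_cases h1 : wMax L w <;> by_cases h2 : wMin L w <;> simp [h1, h2] <;> ring

lemma sfun_mem (w : Fin L → Bool) :
    min p (1-p) ≤ sfun L p w ∧ sfun L p w ≤ 1 - min p (1-p) := by
  have h2 : min p (1-p) ≤ 1/2 := by
    rcases le_total p (1/2) with h | h
    · exact le_trans (min_le_left _ _) h
    · exact le_trans (min_le_right _ _) (by linarith)
  unfold sfun
  split_ifs <;> constructor <;>
    (first
      | linarith [min_le_left p (1-p), min_le_right p (1-p), h2]
      | simp <;> linarith [min_le_left p (1-p), min_le_right p (1-p), h2])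

lemma sfun_pos (hp : 0 < p) (hp1 : p < 1) (w : Fin L → Bool) : 0 < sfun L p w :=
  lt_of_lt_of_le (lt_min hp (by linarith)) (sfun_mem L p w).1

lemma sfun_lt_one (hp : 0 < p) (hp1 : p < 1) (w : Fin L → Bool) : sfun L p w < 1 := by
  have h0 : (0:ℝ) < min p (1-p) := lt_min hp (by linarith)
  linarith [(sfun_mem L p w).2]

lemma wpush_flip (w : Fin L → Bool) (b : Bool) :
    wpush L (wflip L w) b = wflip L (wpush L w (!b)) := by
  funext i
  simp only [wpush, wflip]
  split <;> simp

/-- the transition operator on window functions -/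
def Pop : ((Fin L → Bool) → ℝ) →ₗ[ℝ] ((Fin L → Bool) → ℝ) where
  toFun f := fun w => sfun L p w * f (wpush L w true) + (1 - sfun L p w) * f (wpush L w false)
  map_add' f g := by funext w; simp; ring
  map_smul' r f := by funext w; simp; ring

/-- the antisymmetric subspace -/
def Asub : Submodule ℝ ((Fin L → Bool) → ℝ) where
  carrier := {f | ∀ w, f (wflip L w) = - f w}
  add_mem' hf hg := by intro w; simp [hf w, hg w]; ring
  zero_mem' := by intro w; simp
  smul_mem' r f hf := by intro w; simp [hf w]

lemma Pop_mem (f : (Fin L → Bool) → ℝ) (hf : f ∈ Asub L) : Pop L p f ∈ Asub L := by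
  intro w
  simp only [Pop, LinearMap.coe_mk, AddHom.coe_mk]
  rw [sfun_flip, wpush_flip, wpush_flip, Bool.not_true, Bool.not_false, hf, hf]
  ring

end Walk

noncomputable section Walk2

variable (L : ℕ) (p : ℝ)

/-- iterated push -/
def pushL (w : Fin L → Bool) (b : ℕ → Bool) : ℕ → (Fin L → Bool)
  | 0 => w
  | t+1 => wpush L (pushL w b t) (b t)

lemma pushL_spec (w : Fin L → Bool) (b : ℕ → Bool) (t : ℕ) (i : Fin L) :
    pushL L w b t i = if h : (i : ℕ) + t < L then w ⟨(i : ℕ) + t, h⟩ else b ((i : ℕ) + t - L) := by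
  induction t generalizing i with
  | zero =>
    show w i = _
    rw [dif_pos (by omega : (i:ℕ) + 0 < L)]
    exact congrArg w (Fin.ext (by simp))
  | succ t ih =>
    show wpush L (pushL L w b t) (b t) i = _
    unfold wpush
    rcases Nat.lt_or_ge ((i : ℕ) + 1) L with h | h
    · rw [dif_pos h, ih ⟨(i : ℕ) + 1, h⟩]
      rw [show ((⟨(i:ℕ)+1, h⟩ : Fin L) : ℕ) = (i:ℕ)+1 from rfl]
      rcases Nat.lt_or_ge ((i:ℕ) + (t+1)) L with h2 | h2
      · rw [dif_pos (by omega : (i:ℕ)+1+t < L), dif_pos h2]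
        exact congrArg w (Fin.ext (by simp only [Fin.val_mk]; omega))
      · rw [dif_neg (by omega), dif_neg (by omega)]
        congr 1
        omega
    · rw [dif_neg (by omega)]
      have hiL : (i : ℕ) = L - 1 := by have := i.isLt; omega
      have : ¬ ((i : ℕ) + (t + 1) < L) := by omega
      rw [dif_neg this]
      congr 1
      have := i.isLt
      omega

lemma pushL_reach (w u : Fin L → Bool) :
    pushL L w (fun j => if h : j < L then u ⟨j, h⟩ else true) L = u := by
  funext i
  rw [pushL_spec]
  have hi := i.isLt
  rw [dif_neg (by omega), dif_pos (by omega : (i:ℕ) + L - L < L)]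
  exact congrArg u (Fin.ext (by simp only [Fin.val_mk]; omega))

lemma exists_corrector (hp : 0 < p) (hp1 : p < 1) :
    ∃ g : (Fin L → Bool) → ℝ, ∃ Cg : ℝ, (∀ w, |g w| ≤ Cg) ∧
      ∀ w, (2 * sfun L p w - 1) +
        (sfun L p w * g (wpush L w true) + (1 - sfun L p w) * g (wpush L w false))
        = g w := by
  classical
  set T : Asub L →ₗ[ℝ] Asub L :=
    LinearMap.id - ((Pop L p).restrict (fun f hf => Pop_mem L p f hf)) with hT
  have hinj : Function.Injective T := by
    rw [← LinearMap.ker_eq_bot, LinearMap.ker_eq_bot']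
    intro x hx
    have hfix : (x : (Fin L → Bool) → ℝ) = Pop L p (x : (Fin L → Bool) → ℝ) := by
      have := congrArg (Subtype.val) hx
      simpa [hT, sub_eq_zero, LinearMap.restrict_apply] using this
    set f : (Fin L → Bool) → ℝ := (x : (Fin L → Bool) → ℝ) with hf
    obtain ⟨w₀, hw₀⟩ := Finite.exists_max f
    set Mx := f w₀ with hMx
    have hpush : ∀ w, f w = Mx → ∀ b, f (wpush L w b) = Mx := by
      intro w hw b
      have heq : sfun L p w * f (wpush L w true) + (1 - sfun L p w) * f (wpush L w false) = Mx := by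
        rw [← hw]; exact (congrFun hfix w).symm
      have h1 := hw₀ (wpush L w true)
      have h2 := hw₀ (wpush L w false)
      have hs0 := sfun_pos L p hp hp1 w
      have hs1 := sfun_lt_one L p hp hp1 w
      have e1 : f (wpush L w true) = Mx := by nlinarith
      have e2 : f (wpush L w false) = Mx := by nlinarith
      cases b
      · exact e2
      · exact e1
    have hall : ∀ u, f u = Mx := by
      intro u
      have hiter : ∀ t (b : ℕ → Bool), f (pushL L w₀ b t) = Mx := by
        intro t b
        induction t with
        | zero => rfl
        | succ t ih => exact hpush _ ih (b t)
      have := hiter L (fun j => if h : j < L then u ⟨j, h⟩ else true)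
      rwa [pushL_reach] at this
    have hMx0 : Mx = 0 := by
      have h1 : f (wflip L w₀) = - Mx := x.2 w₀
      have h2 : f (wflip L w₀) = Mx := hall _
      linarith [h1, h2.symm.trans h1]
    ext w
    simpa [hf, hMx0] using hall w
  have hsurj : Function.Surjective T :=
    (LinearMap.injective_iff_surjective_of_finrank_eq_finrank rfl).mp hinj
  have hv : (fun w => 2 * sfun L p w - 1) ∈ Asub L := by
    intro w
    show 2 * sfun L p (wflip L w) - 1 = -(2 * sfun L p w - 1)
    rw [sfun_flip]
    ring
  obtain ⟨gx, hgx⟩ := hsurj ⟨fun w => 2 * sfun L p w - 1, hv⟩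
  refine ⟨(gx : (Fin L → Bool) → ℝ), ∑ w : Fin L → Bool, |(gx : (Fin L → Bool) → ℝ) w|,
    fun w => ?_, fun w => ?_⟩
  · exact Finset.single_le_sum (f := fun w => |(gx : (Fin L → Bool) → ℝ) w|)
      (fun _ _ => abs_nonneg _) (Finset.mem_univ w)
  · have := congrArg Subtype.val hgx
    have h2 := congrFun this w
    simp only [hT, LinearMap.sub_apply, LinearMap.id_apply, LinearMap.restrict_apply] at h2
    have : (gx : (Fin L → Bool) → ℝ) w - Pop L p (gx : (Fin L → Bool) → ℝ) w
        = 2 * sfun L p w - 1 := h2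
    show (2 * sfun L p w - 1) + Pop L p (gx : (Fin L → Bool) → ℝ) w = _
    linarith

end Walk2

noncomputable section Walk3

variable (L : ℕ) (p : ℝ)

/-- the window of the last `L` increments of `h` ending at time `L + k` -/
def wbit (h : ℕ → ℤ) (k : ℕ) : Fin L → Bool :=
  fun i => decide (h (k + (i : ℕ) + 1) = h (k + (i : ℕ)) + 1)

def PathOn (n : ℕ) (h : ℕ → ℤ) : Prop :=
  ∀ j, j < n → h (j + 1) = h j + 1 ∨ h (j + 1) = h j - 1

lemma wsum_zero (w : Fin L → Bool) : wsum L w 0 = 0 := by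
  unfold wsum
  apply Finset.sum_eq_zero
  intro i _
  rw [if_neg (by omega : ¬ L - 0 ≤ (i : ℕ))]

lemma wsum_succ (w : Fin L → Bool) (m : ℕ) (hm : m + 1 ≤ L) :
    wsum L w (m + 1) = wsum L w m + bval (w ⟨L - m - 1, by omega⟩) := by
  unfold wsum
  have key : ∀ i ∈ (Finset.univ : Finset (Fin L)), (if L - (m+1) ≤ (i:ℕ) then bval (w i) else 0)
      = (if L - m ≤ (i:ℕ) then bval (w i) else 0)
        + (if i = (⟨L - m - 1, by omega⟩ : Fin L) then bval (w i) else 0) := by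
    intro i _
    by_cases hc : (i : ℕ) = L - m - 1
    · have h3 : i = (⟨L - m - 1, by omega⟩ : Fin L) := Fin.ext (by simp [hc])
      rw [if_pos (by omega : L - (m+1) ≤ (i:ℕ)), if_neg (by omega : ¬ (L - m ≤ (i:ℕ))),
        if_pos h3, zero_add]
    · have h3 : i ≠ (⟨L - m - 1, by omega⟩ : Fin L) := by
        intro hh; exact hc (by simpa using congrArg Fin.val hh)
      rw [if_neg h3, add_zero]
      rcases Nat.lt_or_ge (i:ℕ) (L - m - 1) with hlt | hge
      · rw [if_neg (by omega), if_neg (by omega)]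
      · rw [if_pos (by omega), if_pos (by omega)]
  rw [Finset.sum_congr rfl key, Finset.sum_add_distrib,
    Finset.sum_ite_eq' Finset.univ (⟨L - m - 1, by omega⟩ : Fin L) (fun i => bval (w i)),
    if_pos (Finset.mem_univ _)]

lemma path_wsum (h : ℕ → ℤ) (k : ℕ) (hpath : PathOn (L + k) h) :
    ∀ m, m ≤ L → h (L + k) - h (L + k - m) = wsum L (wbit L h k) m := by
  intro m
  induction m with
  | zero => intro _; rw [wsum_zero]; simp
  | succ m ih =>
    intro hm
    have ihm := ih (by omega)
    rw [wsum_succ L _ m hm, ← ihm]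
    unfold wbit
    simp only [Fin.val_mk]
    have e1 : k + (L - m - 1) + 1 = L + k - m := by omega
    have e2 : k + (L - m - 1) = L + k - m - 1 := by omega
    have e3 : L + k - (m + 1) = L + k - m - 1 := by omega
    rw [e1, e2, e3]
    have hstepj := hpath (L + k - m - 1) (by omega)
    have hidx : L + k - m - 1 + 1 = L + k - m := by omega
    rw [hidx] at hstepj
    rcases hstepj with hup | hdn
    · rw [decide_eq_true hup]
      show _ - _ = _ + (1:ℤ)
      omega
    · rw [decide_eq_false (by omega : ¬ (h (L+k-m) = h (L+k-m-1)+1))]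
      show _ - _ = _ + (-1:ℤ)
      omega

lemma locMax_iff (h : ℕ → ℤ) (k : ℕ) (hpath : PathOn (L + k) h) :
    LocMaxAt L h (L + k) ↔ wMax L (wbit L h k) := by
  have hmin : min L (L + k) = L := by omega
  constructor
  · intro hmax m hm
    rw [← path_wsum L h k hpath m hm]
    have := hmax m (by omega)
    omega
  · intro hmax m hm
    rw [hmin] at hm
    have := hmax m hm
    rw [← path_wsum L h k hpath m hm] at this
    omega

lemma locMin_iff (h : ℕ → ℤ) (k : ℕ) (hpath : PathOn (L + k) h) :
    LocMinAt L h (L + k) ↔ wMin L (wbit L h k) := by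
  have hmin : min L (L + k) = L := by omega
  constructor
  · intro hmax m hm
    rw [← path_wsum L h k hpath m hm]
    have := hmax m (by omega)
    omega
  · intro hmax m hm
    rw [hmin] at hm
    have := hmax m hm
    rw [← path_wsum L h k hpath m hm] at this
    omega

lemma stepPr_eq_sfun (h : ℕ → ℤ) (k : ℕ) (hpath : PathOn (L + k) h) :
    stepPr L p (1 - p) h (L + k) = sfun L p (wbit L h k) := by
  unfold stepPr sfun
  rw [if_congr (and_congr (locMax_iff L h k hpath) (locMin_iff L h k hpath)) rfl rfl,
    if_congr (locMax_iff L h k hpath) rfl rfl, if_congr (locMin_iff L h k hpath) rfl rfl]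

lemma stepPr_mem (q : ℝ) (hq : q = 1 - p) (h : ℕ → ℤ) (n : ℕ) :
    min p (1-p) ≤ stepPr L p q h n ∧ stepPr L p q h n ≤ 1 - min p (1-p) := by
  subst hq
  have h2 : min p (1-p) ≤ 1/2 := by
    rcases le_total p (1/2) with h | h
    · exact le_trans (min_le_left _ _) h
    · exact le_trans (min_le_right _ _) (by linarith)
  unfold stepPr
  split_ifs <;> constructor <;>
    linarith [min_le_left p (1-p), min_le_right p (1-p), h2]

end Walk3

noncomputable section Walk4

open MeasureTheory

variable {Ω : Type*} [MeasurableSpace Ω] (μ : Measure Ω) (X : ℕ → Ω → ℤ)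

def cylE (n : ℕ) (h : ℕ → ℤ) : Set Ω := {ω | ∀ k ≤ n, X k ω = h k}

def upE (n : ℕ) (h : ℕ → ℤ) : Set Ω := {ω | X (n+1) ω = h n + 1 ∧ ∀ k ≤ n, X k ω = h k}

def dnE (n : ℕ) (h : ℕ → ℤ) : Set Ω := {ω | X (n+1) ω = h n - 1 ∧ ∀ k ≤ n, X k ω = h k}

def histF (n : ℕ) : Ω → (ℕ → ℤ) := fun ω j => X (min j n) ω

def filt (n : ℕ) : MeasurableSpace Ω := MeasurableSpace.comap (histF X n) ⊤

def Tset (n : ℕ) : Set (ℕ → ℤ) := {h | ∀ j, h j = h (min j n)}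

variable {X}

lemma measurableSet_cylE (hX : ∀ n, Measurable (X n)) (n : ℕ) (h : ℕ → ℤ) :
    MeasurableSet (cylE X n h) := by
  have : cylE X n h = ⋂ (k : ℕ), ⋂ (_ : k ≤ n), (X k)⁻¹' {h k} := by
    ext ω; simp [cylE]
  rw [this]
  exact MeasurableSet.iInter fun k => MeasurableSet.iInter fun _ =>
    hX k (measurableSet_singleton _)

lemma measurableSet_upE (hX : ∀ n, Measurable (X n)) (n : ℕ) (h : ℕ → ℤ) :
    MeasurableSet (upE X n h) := by
  have : upE X n h = (X (n+1))⁻¹' {h n + 1} ∩ cylE X n h := by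
    ext ω; exact Iff.rfl
  rw [this]
  exact ((hX (n+1)) (measurableSet_singleton _)).inter (measurableSet_cylE hX n h)

lemma measurableSet_dnE (hX : ∀ n, Measurable (X n)) (n : ℕ) (h : ℕ → ℤ) :
    MeasurableSet (dnE X n h) := by
  have : dnE X n h = (X (n+1))⁻¹' {h n - 1} ∩ cylE X n h := by
    ext ω; exact Iff.rfl
  rw [this]
  exact ((hX (n+1)) (measurableSet_singleton _)).inter (measurableSet_cylE hX n h)

lemma histF_mem_Tset (n : ℕ) (ω : Ω) : histF X n ω ∈ Tset n := by
  intro j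
  show X (min j n) ω = X (min (min j n) n) ω
  congr 1
  omega

lemma cylE_eq_preimage {n : ℕ} {h : ℕ → ℤ} (hT : h ∈ Tset n) :
    histF X n ⁻¹' {h} = cylE X n h := by
  ext ω
  constructor
  · intro hω k hk
    have : histF X n ω k = h k := by rw [Set.mem_preimage, Set.mem_singleton_iff] at hω; rw [hω]
    rw [← this]
    show X k ω = X (min k n) ω
    congr 1
    omega
  · intro hω
    rw [Set.mem_preimage, Set.mem_singleton_iff]
    funext j
    have h1 : X (min j n) ω = h (min j n) := hω (min j n) (by omega)
    show X (min j n) ω = h j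
    rw [h1, ← hT j]

lemma countable_Tset (n : ℕ) : (Tset n : Set (ℕ → ℤ)).Countable := by
  have hinj : Function.Injective
      (fun (h : ↥(Tset n : Set (ℕ → ℤ))) => (fun i : Fin (n+1) => h.val (i : ℕ))) := by
    intro h₁ h₂ he
    apply Subtype.ext
    funext j
    have hj : h₁.val (min j n) = h₂.val (min j n) := by
      have := congrFun he ⟨min j n, by omega⟩
      simpa using this
    have e1 : h₁.val j = h₁.val (min j n) := h₁.2 j
    have e2 : h₂.val j = h₂.val (min j n) := h₂.2 j
    rw [e1, e2, hj]
  exact Set.countable_coe_iff.mp (Function.Injective.countable hinj)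

lemma filt_le (hX : ∀ n, Measurable (X n)) (n : ℕ) : filt X n ≤ ‹MeasurableSpace Ω› := by
  rintro A ⟨S, -, rfl⟩
  haveI : Countable ↥(S ∩ Tset n) :=
    ((countable_Tset n).mono Set.inter_subset_right).to_subtype
  have hU : histF X n ⁻¹' S = ⋃ (h : ↥(S ∩ Tset n)), cylE X n h.val := by
    ext ω
    constructor
    · intro hω
      refine Set.mem_iUnion.mpr ⟨⟨histF X n ω, hω, histF_mem_Tset n ω⟩, ?_⟩
      rw [← cylE_eq_preimage (histF_mem_Tset n ω)]
      exact rfl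
    · rintro hω
      obtain ⟨h, hh⟩ := Set.mem_iUnion.mp hω
      rw [← cylE_eq_preimage h.2.2] at hh
      rw [Set.mem_preimage, Set.mem_singleton_iff] at hh
      rw [Set.mem_preimage, hh]
      exact h.2.1
  rw [hU]
  exact MeasurableSet.iUnion fun h => measurableSet_cylE hX n h.val

lemma filt_mono : Monotone (filt X) := by
  intro n m hnm A hA
  obtain ⟨S, -, rfl⟩ := hA
  refine ⟨(fun f : ℕ → ℤ => fun j => f (min j n)) ⁻¹' S, trivial, ?_⟩
  have hcomp : (fun f : ℕ → ℤ => fun j => f (min j n)) ∘ histF X m = histF X n := by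
    funext ω j
    show X (min (min j n) m) ω = X (min j n) ω
    congr 1
    omega
  rw [← Set.preimage_comp, hcomp]

lemma measurable_filt_comp {β : Type*} [MeasurableSpace β] (n : ℕ) (F : (ℕ → ℤ) → β) :
    Measurable[filt X n] (fun ω => F (histF X n ω)) :=
  fun B _ => ⟨F ⁻¹' B, trivial, rfl⟩

lemma measurableSet_filt (n : ℕ) (S : Set (ℕ → ℤ)) :
    MeasurableSet[filt X n] (histF X n ⁻¹' S) :=
  ⟨S, trivial, rfl⟩

lemma setIntegral_le_filt (hX : ∀ n, Measurable (X n)) (n : ℕ) {F G : Ω → ℝ}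
    (hF : Integrable F μ) (hG : Integrable G μ)
    (hc : ∀ h ∈ Tset n, ∫ ω in cylE X n h, F ω ∂μ ≤ ∫ ω in cylE X n h, G ω ∂μ)
    {A : Set Ω} (hA : MeasurableSet[filt X n] A) :
    ∫ ω in A, F ω ∂μ ≤ ∫ ω in A, G ω ∂μ := by
  obtain ⟨S, -, rfl⟩ := hA
  haveI : Countable ↥(S ∩ Tset n) :=
    ((countable_Tset n).mono Set.inter_subset_right).to_subtype
  have hU : histF X n ⁻¹' S = ⋃ (h : ↥(S ∩ Tset n)), cylE X n h.val := by
    ext ω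
    constructor
    · intro hω
      refine Set.mem_iUnion.mpr ⟨⟨histF X n ω, hω, histF_mem_Tset n ω⟩, ?_⟩
      rw [← cylE_eq_preimage (histF_mem_Tset n ω)]
      exact rfl
    · rintro hω
      obtain ⟨h, hh⟩ := Set.mem_iUnion.mp hω
      rw [← cylE_eq_preimage h.2.2] at hh
      rw [Set.mem_preimage, Set.mem_singleton_iff] at hh
      rw [Set.mem_preimage, hh]
      exact h.2.1
  have hm : ∀ h : ↥(S ∩ Tset n), MeasurableSet (cylE X n h.val) :=
    fun h => measurableSet_cylE hX n h.val
  have hdisj : Pairwise (Function.onFun Disjoint fun (h : ↥(S ∩ Tset n)) => cylE X n h.val) := by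
    intro h₁ h₂ hne
    rw [Function.onFun, Set.disjoint_left]
    intro ω hω₁ hω₂
    apply hne
    ext j
    have e1 : h₁.val j = X (min j n) ω := by
      rw [h₁.2.2 j]; exact (hω₁ (min j n) (by omega)).symm
    have e2 : h₂.val j = X (min j n) ω := by
      rw [h₂.2.2 j]; exact (hω₂ (min j n) (by omega)).symm
    rw [e1, e2]
  rw [hU]
  have hsF := hasSum_integral_iUnion hm hdisj (hF.integrableOn)
  have hsG := hasSum_integral_iUnion hm hdisj (hG.integrableOn)
  rw [← hsF.tsum_eq, ← hsG.tsum_eq]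
  exact Summable.tsum_le_tsum (fun h => hc h.val h.2.2) hsF.summable hsG.summable

lemma setIntegral_eq_zero_filt (hX : ∀ n, Measurable (X n)) (n : ℕ) {F : Ω → ℝ}
    (hF : Integrable F μ)
    (hc : ∀ h ∈ Tset n, ∫ ω in cylE X n h, F ω ∂μ = 0)
    {A : Set Ω} (hA : MeasurableSet[filt X n] A) :
    ∫ ω in A, F ω ∂μ = 0 := by
  have h1 := setIntegral_le_filt μ hX n hF (integrable_zero _ _ _)
    (fun h hh => by rw [hc h hh]; simp) hA
  have h2 := setIntegral_le_filt μ hX n (integrable_zero _ _ _) hF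
    (fun h hh => by rw [hc h hh]; simp) hA
  simp only [Pi.zero_apply, integral_zero, integral_zero'] at h1 h2
  linarith

end Walk4

noncomputable section Walk5

open MeasureTheory

variable {Ω : Type*} [MeasurableSpace Ω] (μ : Measure Ω) {X : ℕ → Ω → ℤ}

lemma measure_dnE [IsProbabilityMeasure μ] (hX : ∀ n, Measurable (X n))
    (hstep : ∀ᵐ ω ∂μ, ∀ n, X (n+1) ω = X n ω + 1 ∨ X (n+1) ω = X n ω - 1)
    {s : ℝ} (hs0 : 0 ≤ s) (hs1 : s ≤ 1) (n : ℕ) (h : ℕ → ℤ)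
    (hup : μ (upE X n h) = ENNReal.ofReal s * μ (cylE X n h)) :
    μ (dnE X n h) = ENNReal.ofReal (1 - s) * μ (cylE X n h) := by
  set N := {ω | ¬ ∀ n, X (n+1) ω = X n ω + 1 ∨ X (n+1) ω = X n ω - 1} with hNdef
  have hN : μ N = 0 := hstep
  have hsubU : upE X n h ⊆ cylE X n h := fun ω hω => hω.2
  have hsubD : dnE X n h ⊆ cylE X n h := fun ω hω => hω.2
  have hsub : cylE X n h \ (upE X n h ∪ dnE X n h) ⊆ N := by
    intro ω hω
    rw [Set.mem_diff] at hω
    intro hgood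
    have hx : X n ω = h n := hω.1 n (le_refl n)
    rcases hgood n with hu | hd
    · exact hω.2 (Or.inl ⟨by rw [hu, hx], hω.1⟩)
    · exact hω.2 (Or.inr ⟨by rw [hd, hx], hω.1⟩)
  have hdisj : Disjoint (upE X n h) (dnE X n h) := by
    rw [Set.disjoint_left]
    intro ω h1 h2
    have := h1.1
    have := h2.1
    omega
  have hcyl_eq : μ (cylE X n h) = μ (upE X n h) + μ (dnE X n h) := by
    have h1 : μ (cylE X n h) ≤ μ (upE X n h ∪ dnE X n h) := by
      calc μ (cylE X n h)
          ≤ μ ((upE X n h ∪ dnE X n h) ∪ (cylE X n h \ (upE X n h ∪ dnE X n h))) := by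
            apply measure_mono
            intro ω hω
            by_cases hm : ω ∈ upE X n h ∪ dnE X n h
            · exact Or.inl hm
            · exact Or.inr ⟨hω, hm⟩
        _ ≤ μ (upE X n h ∪ dnE X n h) + μ (cylE X n h \ (upE X n h ∪ dnE X n h)) :=
            measure_union_le _ _
        _ = μ (upE X n h ∪ dnE X n h) := by rw [measure_mono_null hsub hN, add_zero]
    have h2 : μ (upE X n h ∪ dnE X n h) ≤ μ (cylE X n h) :=
      measure_mono (Set.union_subset hsubU hsubD)
    rw [le_antisymm h1 h2]
    exact measure_union hdisj (measurableSet_dnE hX n h)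
  have hsum : ENNReal.ofReal s * μ (cylE X n h) + ENNReal.ofReal (1 - s) * μ (cylE X n h)
      = μ (cylE X n h) := by
    rw [← add_mul, ← ENNReal.ofReal_add hs0 (by linarith)]
    norm_num
  have hfin : ENNReal.ofReal s * μ (cylE X n h) ≠ ⊤ :=
    ENNReal.mul_ne_top ENNReal.ofReal_ne_top (measure_ne_top μ _)
  have : ENNReal.ofReal s * μ (cylE X n h) + μ (dnE X n h)
      = ENNReal.ofReal s * μ (cylE X n h) + ENNReal.ofReal (1 - s) * μ (cylE X n h) := by
    rw [hsum, ← hup, ← hcyl_eq]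
  exact (ENNReal.add_right_inj hfin).mp this

end Walk5

section Walk6

open Filter

lemma count_tendsto {Q : ℕ → Prop} (hQ : {n | Q n}.Infinite) :
    Tendsto (fun n => ∑ k ∈ Finset.range n, (if Q k then (1:ℝ) else 0)) atTop atTop := by
  classical
  have hmono : Monotone (fun n => ∑ k ∈ Finset.range n, (if Q k then (1:ℝ) else 0)) := by
    intro a b hab
    apply Finset.sum_le_sum_of_subset_of_nonneg (Finset.range_subset_range.mpr hab)
    intro i _ _
    split <;> norm_num
  apply tendsto_atTop_atTop_of_monotone hmono
  intro b
  obtain ⟨m, hm⟩ := exists_nat_ge b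
  suffices hh : ∀ m : ℕ, ∃ n, (m : ℝ) ≤ ∑ k ∈ Finset.range n, (if Q k then (1:ℝ) else 0) by
    obtain ⟨n, hn⟩ := hh m
    exact ⟨n, le_trans hm hn⟩
  intro m
  induction m with
  | zero => exact ⟨0, by simp⟩
  | succ m ih =>
    obtain ⟨n, hn⟩ := ih
    obtain ⟨k, hk, hkn⟩ := hQ.exists_gt n
    refine ⟨k+1, ?_⟩
    have hsplit : ∑ j ∈ Finset.range (k+1), (if Q j then (1:ℝ) else 0)
        = ∑ j ∈ Finset.range n, (if Q j then (1:ℝ) else 0)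
          + ∑ j ∈ Finset.Ico n (k+1), (if Q j then (1:ℝ) else 0) := by
      rw [Finset.range_eq_Ico, Finset.range_eq_Ico]
      exact (Finset.sum_Ico_consecutive _ (by omega : 0 ≤ n) (by omega : n ≤ k + 1)).symm
    have hterm : (1:ℝ) ≤ ∑ j ∈ Finset.Ico n (k+1), (if Q j then (1:ℝ) else 0) := by
      have hmem : k ∈ Finset.Ico n (k+1) := by rw [Finset.mem_Ico]; omega
      have H := Finset.single_le_sum (f := fun j => (if Q j then (1:ℝ) else 0))
        (fun i _ => by split <;> norm_num) hmem
      have hQk : Q k := hk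
      rw [if_pos hQk] at H
      exact H
    rw [hsplit]
    push_cast
    linarith

lemma discrete_ivt (f : ℕ → ℤ)
    (hst : ∀ n, f (n+1) = f n + 1 ∨ f (n+1) = f n - 1) (t : ℤ) :
    ∀ d a, t ≤ f a → f (a+d) ≤ t → ∃ m, a ≤ m ∧ m ≤ a + d ∧ f m = t := by
  intro d
  induction d with
  | zero =>
    intro a h1 h2
    rw [Nat.add_zero] at h2
    exact ⟨a, le_refl a, by omega, by omega⟩
  | succ d ih =>
    intro a h1 h2
    by_cases he : f a = t
    · exact ⟨a, le_refl a, by omega, he⟩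
    · have h1' : t ≤ f (a+1) := by rcases hst a with h | h <;> omega
      have h2' : f (a+1+d) ≤ t := by
        have : a+1+d = a+(d+1) := by omega
        rw [this]
        exact h2
      obtain ⟨m, hm1, hm2, hm3⟩ := ih (a+1) h1' h2'
      exact ⟨m, by omega, by omega, hm3⟩

lemma crossing (f : ℕ → ℤ)
    (hst : ∀ n, f (n+1) = f n + 1 ∨ f (n+1) = f n - 1)
    (hub : ∀ b : ℤ, ∃ n, b ≤ f n) (hlb : ∀ b : ℤ, ∃ n, f n ≤ b) :
    {n | f n = f 0}.Infinite := by
  rw [← Nat.frequently_atTop_iff_infinite]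
  rw [frequently_atTop]
  intro N
  have hne1 : ((Finset.range (N+1)).image f).Nonempty := by simp
  set Mx := ((Finset.range (N+1)).image f).max' hne1 with hMx
  obtain ⟨n₁, hn₁⟩ := hub (Mx + 1)
  have hn₁N : N < n₁ := by
    by_contra hle
    push_neg at hle
    have : f n₁ ≤ Mx := Finset.le_max' _ _ (Finset.mem_image_of_mem f
      (Finset.mem_range.mpr (by omega)))
    omega
  have hf0 : f 0 ≤ Mx := Finset.le_max' _ _ (Finset.mem_image_of_mem f
    (Finset.mem_range.mpr (by omega)))
  have hne2 : ((Finset.range (n₁+1)).image f).Nonempty := by simp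
  set mn := ((Finset.range (n₁+1)).image f).min' hne2 with hmn
  obtain ⟨n₂, hn₂⟩ := hlb (mn - 1)
  have hn₂n₁ : n₁ < n₂ := by
    by_contra hle
    push_neg at hle
    have : mn ≤ f n₂ := Finset.min'_le _ _ (Finset.mem_image_of_mem f
      (Finset.mem_range.mpr (by omega)))
    omega
  have hmn0 : mn ≤ f 0 := Finset.min'_le _ _ (Finset.mem_image_of_mem f
    (Finset.mem_range.mpr (by omega)))
  obtain ⟨m, hm1, hm2, hm3⟩ := discrete_ivt f hst (f 0) (n₂ - n₁) n₁ (by omega)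
    (by rw [show n₁ + (n₂ - n₁) = n₂ by omega]; omega)
  exact ⟨m, by omega, hm3⟩

lemma pigeon (f : ℕ → ℤ) (B B' : ℤ) (hb : ∀ n, B' ≤ f n ∧ f n ≤ B) :
    ∃ j, {n | f n = j}.Infinite ∧ ¬ {n | f n = j + 1}.Infinite := by
  classical
  have hex : ∃ j ∈ Finset.Icc B' B, {n | f n = j}.Infinite := by
    by_contra hno
    push_neg at hno
    have hfin : (Set.univ : Set ℕ).Finite := by
      apply Set.Finite.subset (Set.Finite.biUnion (Finset.Icc B' B).finite_toSet
        (fun j hj => (hno j (by simpa using hj))))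
      intro n _
      simp only [Set.mem_iUnion]
      exact ⟨f n, by simp [Finset.mem_Icc]; exact hb n, rfl⟩
    exact Set.infinite_univ hfin
  set T := (Finset.Icc B' B).filter (fun j => {n | f n = j}.Infinite) with hT
  have hTne : T.Nonempty := by
    obtain ⟨j, hj1, hj2⟩ := hex
    exact ⟨j, Finset.mem_filter.mpr ⟨hj1, hj2⟩⟩
  refine ⟨T.max' hTne, (Finset.mem_filter.mp (T.max'_mem hTne)).2, ?_⟩
  intro hinf
  have hj1 : T.max' hTne + 1 ∈ Finset.Icc B' B := by
    obtain ⟨n, hn⟩ := hinf.nonempty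
    have := hb n
    simp only [Set.mem_setOf_eq] at hn
    rw [Finset.mem_Icc]
    omega
  have hmem : T.max' hTne + 1 ∈ T := Finset.mem_filter.mpr ⟨hj1, hinf⟩
  have := Finset.le_max' T _ hmem
  omega

end Walk6

noncomputable section Walk7

open MeasureTheory Filter

variable {Ω : Type*} [MeasurableSpace Ω] (μ : Measure Ω) (X : ℕ → Ω → ℤ)

/-- The martingale associated to the perturbed walk. -/
def Mart (L : ℕ) (g : (Fin L → Bool) → ℝ) (k : ℕ) (ω : Ω) : ℝ :=
  ((X (L + k) ω - X 0 ω : ℤ) : ℝ) + g (wbit L (fun j => X j ω) k)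

variable {X}

lemma Mart_comp (L : ℕ) (g : (Fin L → Bool) → ℝ) (k : ℕ) :
    Mart X L g k = fun ω =>
      (fun h : ℕ → ℤ => ((h (L + k) - h 0 : ℤ) : ℝ) + g (wbit L h k)) (histF X (L+k) ω) := by
  funext ω
  show ((X (L + k) ω - X 0 ω : ℤ) : ℝ) + g (wbit L (fun j => X j ω) k)
    = ((X ((L+k) ⊓ (L+k)) ω - X (0 ⊓ (L+k)) ω : ℤ) : ℝ)
      + g (wbit L (fun j => X (j ⊓ (L+k)) ω) k)
  have e3 : (L+k) ⊓ (L+k) = L+k := min_self _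
  have e4 : 0 ⊓ (L+k) = 0 := by omega
  rw [e3, e4]
  congr 1
  congr 1
  funext i
  show decide (X (k + (i:ℕ) + 1) ω = X (k + (i:ℕ)) ω + 1)
    = decide (X ((k + (i:ℕ) + 1) ⊓ (L+k)) ω = X ((k + (i:ℕ)) ⊓ (L+k)) ω + 1)
  have hi := i.isLt
  have e1 : (k + (i:ℕ) + 1) ⊓ (L + k) = k + (i:ℕ) + 1 := by omega
  have e2 : (k + (i:ℕ)) ⊓ (L + k) = k + (i:ℕ) := by omega
  rw [e1, e2]

lemma Mart_meas_filt (L : ℕ) (g : (Fin L → Bool) → ℝ) (k : ℕ) :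
    Measurable[filt X (L+k)] (Mart X L g k) := by
  rw [Mart_comp]
  exact measurable_filt_comp (β := ℝ) (L+k)
    (fun h => ((h (L + k) - h 0 : ℤ) : ℝ) + g (wbit L h k))

lemma abs_sub_le_of_steps {ω : Ω} (hω : ∀ n, X (n+1) ω = X n ω + 1 ∨ X (n+1) ω = X n ω - 1)
    (n : ℕ) : |X n ω - X 0 ω| ≤ (n : ℤ) := by
  induction n with
  | zero => simp
  | succ n ih =>
    have ih' := abs_le.mp ih
    rw [abs_le]
    rcases hω n with h | h <;> rw [h] <;> constructor <;> push_cast <;> omega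

lemma Mart_integrable [IsProbabilityMeasure μ] (hX : ∀ n, Measurable (X n))
    (hstep : ∀ᵐ ω ∂μ, ∀ n, X (n+1) ω = X n ω + 1 ∨ X (n+1) ω = X n ω - 1)
    (L : ℕ) (g : (Fin L → Bool) → ℝ) {Cg : ℝ} (hCg : ∀ w, |g w| ≤ Cg) (k : ℕ) :
    Integrable (Mart X L g k) μ := by
  apply Integrable.mono' (integrable_const ((L + k : ℝ) + Cg))
  · exact ((Mart_meas_filt L g k).mono (filt_le hX (L+k)) le_rfl).aestronglyMeasurable
  · filter_upwards [hstep] with ω hω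
    have h1 := abs_sub_le_of_steps hω (L + k)
    have h2 := hCg (wbit L (fun j => X j ω) k)
    rw [Real.norm_eq_abs]
    unfold Mart
    have h1' : |((X (L + k) ω - X 0 ω : ℤ) : ℝ)| ≤ (L + k : ℝ) := by
      rw [← Int.cast_abs]
      exact_mod_cast h1
    calc |((X (L + k) ω - X 0 ω : ℤ) : ℝ) + g (wbit L (fun j => X j ω) k)|
        ≤ |((X (L + k) ω - X 0 ω : ℤ) : ℝ)| + |g (wbit L (fun j => X j ω) k)| := abs_add_le _ _
      _ ≤ (L + k : ℝ) + Cg := add_le_add h1' h2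

lemma wbit_eqOn_cyl (L : ℕ) {k : ℕ} {h : ℕ → ℤ} {ω : Ω} (hω : ω ∈ cylE X (L+k) h) :
    wbit L (fun j => X j ω) k = wbit L h k := by
  funext i
  have hi := i.isLt
  show decide (X (k + (i:ℕ) + 1) ω = X (k + (i:ℕ)) ω + 1)
    = decide (h (k + (i:ℕ) + 1) = h (k + (i:ℕ)) + 1)
  rw [hω (k + (i:ℕ) + 1) (by omega), hω (k + (i:ℕ)) (by omega)]

lemma Mart_cyl_integral [IsProbabilityMeasure μ] (hX : ∀ n, Measurable (X n))
    (hstep : ∀ᵐ ω ∂μ, ∀ n, X (n+1) ω = X n ω + 1 ∨ X (n+1) ω = X n ω - 1)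
    {L : ℕ} {p : ℝ} (hp : 0 < p) (hp1 : p < 1)
    (hmc : ∀ (n : ℕ) (h : ℕ → ℤ),
      μ (upE X n h) = ENNReal.ofReal (stepPr L p (1-p) h n) * μ (cylE X n h))
    {g : (Fin L → Bool) → ℝ}
    (hgeq : ∀ w, (2 * sfun L p w - 1) +
        (sfun L p w * g (wpush L w true) + (1 - sfun L p w) * g (wpush L w false)) = g w)
    {Cg : ℝ} (hCg : ∀ w, |g w| ≤ Cg) (k : ℕ) (h : ℕ → ℤ) :
    ∫ ω in cylE X (L+k) h, (Mart X L g (k+1) ω - Mart X L g k ω) ∂μ = 0 := by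
  have hN : μ {ω | ¬ ∀ n, X (n+1) ω = X n ω + 1 ∨ X (n+1) ω = X n ω - 1} = 0 := hstep
  by_cases hpath : PathOn (L+k) h
  · -- main case
    have hs : stepPr L p (1-p) h (L+k) = sfun L p (wbit L h k) := stepPr_eq_sfun L p h k hpath
    set n := L + k with hn
    set w := wbit L h k with hw
    set s := stepPr L p (1-p) h n with hsdef
    have hsb := stepPr_mem L p (1-p) rfl h n
    have hmin0 : (0:ℝ) < min p (1-p) := lt_min hp (by linarith)
    have hs0 : 0 ≤ s := by rw [hsdef]; linarith [hsb.1]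
    have hs1 : s ≤ 1 := by rw [hsdef]; linarith [hsb.2]
    have hup : μ (upE X n h) = ENNReal.ofReal s * μ (cylE X n h) := hmc n h
    have hdn : μ (dnE X n h) = ENNReal.ofReal (1-s) * μ (cylE X n h) :=
      measure_dnE μ hX hstep hs0 hs1 n h hup
    set m0 : ℝ := ((h n - h 0 : ℤ) : ℝ) + g w with hm0
    set mp : ℝ := ((h n + 1 - h 0 : ℤ) : ℝ) + g (wpush L w true) with hmp
    set mm : ℝ := ((h n - 1 - h 0 : ℤ) : ℝ) + g (wpush L w false) with hmm
    have hcylm := measurableSet_cylE hX n h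
    have hupm := measurableSet_upE hX n h
    have hdnm := measurableSet_dnE hX n h
    have hsubU : upE X n h ⊆ cylE X n h := fun ω hω => hω.2
    have hsubD : dnE X n h ⊆ cylE X n h := fun ω hω => hω.2
    -- pointwise identities
    have e0 : Set.EqOn (Mart X L g k) (fun _ => m0) (cylE X n h) := by
      intro ω hω
      show ((X n ω - X 0 ω : ℤ) : ℝ) + g (wbit L (fun j => X j ω) k) = m0
      rw [wbit_eqOn_cyl L hω, hω n (le_refl n), hω 0 (by omega), hm0, ← hw]
    have hwin_up : ∀ ω ∈ upE X n h,
        wbit L (fun j => X j ω) (k+1) = wpush L w true := by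
      intro ω hω
      funext i
      have hi := i.isLt
      by_cases hiL : (i:ℕ) + 1 < L
      · have hRHS : wpush L w true i
            = decide (h (k + ((i:ℕ)+1) + 1) = h (k + ((i:ℕ)+1)) + 1) := by
          unfold wpush
          rw [dif_pos hiL, hw]
          rfl
        rw [hRHS]
        show decide (X (k + 1 + (i:ℕ) + 1) ω = X (k + 1 + (i:ℕ)) ω + 1) = _
        have e1 : k + 1 + (i:ℕ) + 1 = k + ((i:ℕ)+1) + 1 := by omega
        have e2 : k + 1 + (i:ℕ) = k + ((i:ℕ)+1) := by omega
        rw [hω.2 (k + 1 + (i:ℕ) + 1) (by omega), hω.2 (k + 1 + (i:ℕ)) (by omega), e1, e2]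
      · have hRHS : wpush L w true i = true := by unfold wpush; rw [dif_neg hiL]
        rw [hRHS]
        show decide (X (k + 1 + (i:ℕ) + 1) ω = X (k + 1 + (i:ℕ)) ω + 1) = true
        have e1 : k + 1 + (i:ℕ) + 1 = n + 1 := by omega
        have e2 : k + 1 + (i:ℕ) = n := by omega
        rw [e1, e2, hω.1, hω.2 n (le_refl n)]
        simp
    have hwin_dn : ∀ ω ∈ dnE X n h,
        wbit L (fun j => X j ω) (k+1) = wpush L w false := by
      intro ω hω
      funext i
      have hi := i.isLt
      by_cases hiL : (i:ℕ) + 1 < L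
      · have hRHS : wpush L w false i
            = decide (h (k + ((i:ℕ)+1) + 1) = h (k + ((i:ℕ)+1)) + 1) := by
          unfold wpush
          rw [dif_pos hiL, hw]
          rfl
        rw [hRHS]
        show decide (X (k + 1 + (i:ℕ) + 1) ω = X (k + 1 + (i:ℕ)) ω + 1) = _
        have e1 : k + 1 + (i:ℕ) + 1 = k + ((i:ℕ)+1) + 1 := by omega
        have e2 : k + 1 + (i:ℕ) = k + ((i:ℕ)+1) := by omega
        rw [hω.2 (k + 1 + (i:ℕ) + 1) (by omega), hω.2 (k + 1 + (i:ℕ)) (by omega), e1, e2]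
      · have hRHS : wpush L w false i = false := by unfold wpush; rw [dif_neg hiL]
        rw [hRHS]
        show decide (X (k + 1 + (i:ℕ) + 1) ω = X (k + 1 + (i:ℕ)) ω + 1) = false
        have e1 : k + 1 + (i:ℕ) + 1 = n + 1 := by omega
        have e2 : k + 1 + (i:ℕ) = n := by omega
        rw [e1, e2, hω.1, hω.2 n (le_refl n)]
        apply decide_eq_false
        omega
    have eU : Set.EqOn (Mart X L g (k+1)) (fun _ => mp) (upE X n h) := by
      intro ω hω
      show ((X (L+(k+1)) ω - X 0 ω : ℤ) : ℝ) + g (wbit L (fun j => X j ω) (k+1)) = mp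
      have eL : L + (k+1) = n + 1 := by omega
      rw [eL, hω.1, hω.2 0 (by omega), hwin_up ω hω, hmp]
    have eD : Set.EqOn (Mart X L g (k+1)) (fun _ => mm) (dnE X n h) := by
      intro ω hω
      show ((X (L+(k+1)) ω - X 0 ω : ℤ) : ℝ) + g (wbit L (fun j => X j ω) (k+1)) = mm
      have eL : L + (k+1) = n + 1 := by omega
      rw [eL, hω.1, hω.2 0 (by omega), hwin_dn ω hω, hmm]
    -- integral computation
    have hint1 := Mart_integrable μ hX hstep L g hCg k
    have hint2 := Mart_integrable μ hX hstep L g hCg (k+1)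
    have hAE : cylE X n h =ᵐ[μ] ((upE X n h ∪ dnE X n h : Set Ω)) := by
      rw [MeasureTheory.ae_eq_set]
      constructor
      · apply measure_mono_null _ hN
        intro ω hω
        rw [Set.mem_diff] at hω
        intro hgood
        have hx : X n ω = h n := hω.1 n (le_refl n)
        rcases hgood n with hu | hd
        · exact hω.2 (Or.inl ⟨by rw [hu, hx], hω.1⟩)
        · exact hω.2 (Or.inr ⟨by rw [hd, hx], hω.1⟩)
      · have hempty : (upE X n h ∪ dnE X n h) \ cylE X n h = ∅ := by
          rw [Set.diff_eq_empty]
          exact Set.union_subset hsubU hsubD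
        rw [hempty]
        exact measure_empty
    have hdisj : Disjoint (upE X n h) (dnE X n h) := by
      rw [Set.disjoint_left]
      intro ω h1 h2
      have := h1.1
      have := h2.1
      omega
    have hI2 : ∫ ω in cylE X n h, Mart X L g (k+1) ω ∂μ
        = mp * (μ (upE X n h)).toReal + mm * (μ (dnE X n h)).toReal := by
      rw [setIntegral_congr_set hAE,
        setIntegral_union hdisj hdnm hint2.integrableOn hint2.integrableOn,
        setIntegral_congr_fun hupm eU, setIntegral_congr_fun hdnm eD,
        setIntegral_const, setIntegral_const]
      simp [mul_comm, Measure.real_def]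
    have hI1 : ∫ ω in cylE X n h, Mart X L g k ω ∂μ = m0 * (μ (cylE X n h)).toReal := by
      rw [setIntegral_congr_fun hcylm e0, setIntegral_const]
      simp [mul_comm, Measure.real_def]
    rw [integral_sub hint2.integrableOn hint1.integrableOn, hI1, hI2]
    have hCu : (μ (upE X n h)).toReal = s * (μ (cylE X n h)).toReal := by
      rw [hup, ENNReal.toReal_mul, ENNReal.toReal_ofReal hs0]
    have hCd : (μ (dnE X n h)).toReal = (1-s) * (μ (cylE X n h)).toReal := by
      rw [hdn, ENNReal.toReal_mul, ENNReal.toReal_ofReal (by linarith)]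
    rw [hCu, hCd, hm0, hmp, hmm]
    have hgw := hgeq w
    rw [← hs] at hgw
    push_cast
    linear_combination ((μ (cylE X n h)).toReal) * hgw
  · -- degenerate cylinder
    unfold PathOn at hpath
    push_neg at hpath
    obtain ⟨j, hj, hbad⟩ := hpath
    have hnull : μ (cylE X (L+k) h) = 0 := by
      apply measure_mono_null _ hN
      intro ω hω hgood
      rcases hgood j with hu | hd
      · rw [hω j (by omega), hω (j+1) (by omega)] at hu
        exact hbad.1 hu
      · rw [hω j (by omega), hω (j+1) (by omega)] at hd
        exact hbad.2 hd
    rw [Measure.restrict_eq_zero.mpr hnull]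
    exact integral_zero_measure _

end Walk7

noncomputable section Walk8

open MeasureTheory Filter

variable {Ω : Type*} [MeasurableSpace Ω] (μ : Measure Ω) (X : ℕ → Ω → ℤ)

/-- the full filtration of the process -/
def wfilt (hX : ∀ n, Measurable (X n)) : Filtration ℕ ‹MeasurableSpace Ω› where
  seq := fun n => filt X n
  mono' := fun a b hab => filt_mono hab
  le' := fun n => filt_le hX n

/-- the filtration shifted by `L` -/
def wfiltL (hX : ∀ n, Measurable (X n)) (L : ℕ) : Filtration ℕ ‹MeasurableSpace Ω› where
  seq := fun k => filt X (L + k)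
  mono' := fun a b hab => filt_mono (by omega)
  le' := fun k => filt_le hX (L + k)

variable {X}

lemma Mart_martingale [IsProbabilityMeasure μ] (hX : ∀ n, Measurable (X n))
    (hstep : ∀ᵐ ω ∂μ, ∀ n, X (n+1) ω = X n ω + 1 ∨ X (n+1) ω = X n ω - 1)
    {L : ℕ} {p : ℝ} (hp : 0 < p) (hp1 : p < 1)
    (hmc : ∀ (n : ℕ) (h : ℕ → ℤ),
      μ (upE X n h) = ENNReal.ofReal (stepPr L p (1-p) h n) * μ (cylE X n h))
    {g : (Fin L → Bool) → ℝ}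
    (hgeq : ∀ w, (2 * sfun L p w - 1) +
        (sfun L p w * g (wpush L w true) + (1 - sfun L p w) * g (wpush L w false)) = g w)
    {Cg : ℝ} (hCg : ∀ w, |g w| ≤ Cg) :
    Martingale (Mart X L g) (wfiltL X hX L) μ := by
  apply martingale_nat
  · exact fun k => (Mart_meas_filt L g k).stronglyMeasurable
  · exact fun k => Mart_integrable μ hX hstep L g hCg k
  · intro k
    have hle : filt X (L + k) ≤ ‹MeasurableSpace Ω› := filt_le hX (L + k)
    have hint1 := Mart_integrable μ hX hstep L g hCg k
    have hint2 := Mart_integrable μ hX hstep L g hCg (k+1)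
    apply ae_eq_condExp_of_forall_setIntegral_eq hle hint2
    · exact fun A _ _ => hint1.integrableOn
    · intro A hA _
      have h0 : ∫ ω in A, (Mart X L g (k+1) ω - Mart X L g k ω) ∂μ = 0 :=
        setIntegral_eq_zero_filt μ hX (L+k) (hint2.sub hint1)
          (fun h _ => Mart_cyl_integral μ hX hstep hp hp1 hmc hgeq hCg k h) hA
      rw [integral_sub hint2.integrableOn hint1.integrableOn] at h0
      linarith
    · exact ((Mart_meas_filt L g k).stronglyMeasurable).aestronglyMeasurable

lemma condexp_lb [IsProbabilityMeasure μ] (hX : ∀ n, Measurable (X n))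
    {L : ℕ} {p : ℝ} (hp : 0 < p) (hp1 : p < 1)
    (hmc : ∀ (n : ℕ) (h : ℕ → ℤ),
      μ (upE X n h) = ENNReal.ofReal (stepPr L p (1-p) h n) * μ (cylE X n h))
    (k : ℕ) (K : ℤ) :
    ∀ᵐ ω ∂μ, min p (1-p) * ({ω' | X k ω' = K}).indicator (1 : Ω → ℝ) ω
      ≤ (μ[({ω' | X (k+1) ω' = K + 1}).indicator (1 : Ω → ℝ) | filt X k]) ω := by
  set c := min p (1-p) with hc
  have hc0 : 0 < c := lt_min hp (by linarith)
  set sK : Set Ω := {ω' | X (k+1) ω' = K + 1} with hsKdef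
  set tK : Set Ω := {ω' | X k ω' = K} with htKdef
  have htK_filt : MeasurableSet[filt X k] tK := by
    have heq : tK = histF X k ⁻¹' {v : ℕ → ℤ | v k = K} := by
      ext ω
      constructor
      · intro hω
        show X (min k k) ω = K
        rw [min_self]
        exact hω
      · intro hω
        have : X (min k k) ω = K := hω
        rwa [min_self] at this
    rw [heq]
    exact measurableSet_filt _ _
  have htK : MeasurableSet tK := filt_le hX k _ htK_filt
  have hsK : MeasurableSet sK := hX (k+1) (measurableSet_singleton (K+1))
  have hf_int : Integrable (sK.indicator (1:Ω→ℝ)) μ := (integrable_const 1).indicator hsK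
  set G : Ω → ℝ := μ[sK.indicator (1:Ω→ℝ) | filt X k] with hG
  set φ : Ω → ℝ := tK.indicator (fun _ => c) with hφ
  have hφ_int : Integrable φ μ := (integrable_const c).indicator htK
  have key : ∀ A, MeasurableSet[filt X k] A →
      ∫ ω in A, φ ω ∂μ ≤ ∫ ω in A, sK.indicator (1:Ω→ℝ) ω ∂μ := by
    intro A hA
    apply setIntegral_le_filt μ hX k hφ_int hf_int _ hA
    intro h _
    by_cases hk : h k = K
    · have e1 : ∫ ω in cylE X k h, φ ω ∂μ = c * (μ (cylE X k h)).toReal := by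
        rw [setIntegral_congr_fun (measurableSet_cylE hX k h)
          (fun ω hω => by
            show φ ω = (fun _ => c) ω
            rw [hφ]
            have : ω ∈ tK := by show X k ω = K; rw [hω k (le_refl k), hk]
            simp [Set.indicator_of_mem this]), setIntegral_const]
        rw [smul_eq_mul, mul_comm]
        rfl
      have e2 : ∫ ω in cylE X k h, sK.indicator (1:Ω→ℝ) ω ∂μ = (μ (upE X k h)).toReal := by
        rw [setIntegral_indicator hsK]
        have hset : cylE X k h ∩ sK = upE X k h := by
          ext ω
          constructor
          · rintro ⟨hcyl, hsk⟩
            exact ⟨by rw [show X (k+1) ω = K + 1 from hsk, hk], hcyl⟩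
          · rintro ⟨h1, h2⟩
            exact ⟨h2, show X (k+1) ω = K + 1 by rw [h1, hk]⟩
        rw [hset]
        simp [Measure.real_def]
      rw [e1, e2, hmc k h]
      have hsb := stepPr_mem L p (1-p) rfl h k
      rw [ENNReal.toReal_mul, ENNReal.toReal_ofReal (by linarith [hsb.1] : 0 ≤ stepPr L p (1-p) h k)]
      exact mul_le_mul_of_nonneg_right hsb.1 ENNReal.toReal_nonneg
    · have e1 : ∫ ω in cylE X k h, φ ω ∂μ = 0 := by
        rw [setIntegral_congr_fun (measurableSet_cylE hX k h)
          (fun ω hω => by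
            show φ ω = (fun _ => (0:ℝ)) ω
            rw [hφ]
            have : ω ∉ tK := by
              show ¬ X k ω = K
              rw [hω k (le_refl k)]
              exact hk
            simp [Set.indicator_of_notMem this])]
        simp
      rw [e1]
      apply setIntegral_nonneg (measurableSet_cylE hX k h)
      intro ω _
      exact Set.indicator_nonneg (fun _ _ => zero_le_one) ω
  have hG_meas : StronglyMeasurable[filt X k] G := stronglyMeasurable_condExp
  have hφ_meas : StronglyMeasurable[filt X k] φ := stronglyMeasurable_const.indicator htK_filt
  set B : ℕ → Set Ω := fun m => {ω | 1/((m:ℝ)+1) ≤ φ ω - G ω} with hB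
  have hB_filt : ∀ m, MeasurableSet[filt X k] (B m) := by
    intro m
    have hmeas : Measurable[filt X k] (fun ω => φ ω - G ω) :=
      (hφ_meas.measurable).sub (hG_meas.measurable)
    exact hmeas measurableSet_Ici
  have hB_null : ∀ m, μ (B m) = 0 := by
    intro m
    have hmeas : MeasurableSet (B m) := filt_le hX k _ (hB_filt m)
    have h1 : (1/((m:ℝ)+1)) * (μ (B m)).toReal ≤ ∫ ω in B m, (φ ω - G ω) ∂μ :=
      by have h := setIntegral_ge_of_const_le hmeas (measure_ne_top μ _) (fun ω hω => hω)
           ((hφ_int.sub integrable_condExp).integrableOn)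
         rw [smul_eq_mul, mul_comm] at h; exact h
    have h3 : ∫ ω in B m, G ω ∂μ = ∫ ω in B m, sK.indicator (1:Ω→ℝ) ω ∂μ :=
      setIntegral_condExp (filt_le hX k) hf_int (hB_filt m)
    have h2 : ∫ ω in B m, (φ ω - G ω) ∂μ ≤ 0 := by
      rw [integral_sub hφ_int.integrableOn integrable_condExp.integrableOn]
      linarith [key (B m) (hB_filt m), h3]
    have hpos : (0:ℝ) < 1/((m:ℝ)+1) := by positivity
    have htr : (μ (B m)).toReal = 0 := by
      nlinarith [ENNReal.toReal_nonneg (a := μ (B m))]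
    rcases (ENNReal.toReal_eq_zero_iff _).mp htr with h | h
    · exact h
    · exact absurd h (measure_ne_top μ _)
  have hcover : {ω | G ω < φ ω} ⊆ ⋃ m, B m := by
    intro ω hω
    simp only [Set.mem_setOf_eq] at hω
    obtain ⟨m, hm⟩ := exists_nat_one_div_lt (by linarith : (0:ℝ) < φ ω - G ω)
    exact Set.mem_iUnion.mpr ⟨m, le_of_lt hm⟩
  have hnull : μ {ω | G ω < φ ω} = 0 :=
    measure_mono_null hcover (measure_iUnion_null hB_null)
  rw [ae_iff]
  apply measure_mono_null _ hnull
  intro ω hω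
  simp only [Set.mem_setOf_eq, not_le] at hω ⊢
  have hφω : φ ω = c * tK.indicator (1:Ω→ℝ) ω := by
    rw [hφ]
    by_cases hmem : ω ∈ tK
    · simp [Set.indicator_of_mem hmem]
    · simp [Set.indicator_of_notMem hmem]
  rw [hφω]
  exact hω

end Walk8

open MeasureTheory Filter in
theorem stmt_17 (L : ℕ) (hL : 1 ≤ L) (p q : ℝ)
    (hp : 0 < p) (hp1 : p < 1) (hq : 0 < q) (hq1 : q < 1) (hpq : q = 1 - p)
    (Ω : Type*) [MeasurableSpace Ω] (μ : Measure Ω) [IsProbabilityMeasure μ]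
    (X : ℕ → Ω → ℤ) (hX : ∀ n, Measurable (X n))
    -- nearest-neighbour steps:
    (hstep : ∀ᵐ ω ∂μ, ∀ n, X (n + 1) ω = X n ω + 1 ∨ X (n + 1) ω = X n ω - 1)
    -- Markov property: conditionally on any past trajectory the walk steps `+1`
    -- with the perturbed-at-extrema probability:
    (hmc : ∀ (n : ℕ) (h : ℕ → ℤ),
      μ {ω | X (n + 1) ω = h n + 1 ∧ ∀ k ≤ n, X k ω = h k}
        = ENNReal.ofReal (stepPr L p q h n) * μ {ω | ∀ k ≤ n, X k ω = h k}) :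
    ∀ᵐ ω ∂μ, {n : ℕ | X n ω = X 0 ω}.Infinite := by
  classical
  subst hpq
  have hmc' : ∀ (n : ℕ) (h : ℕ → ℤ),
      μ (upE X n h) = ENNReal.ofReal (stepPr L p (1-p) h n) * μ (cylE X n h) := hmc
  obtain ⟨g, Cg, hCg, hgeq⟩ := exists_corrector L p hp hp1
  set c := min p (1-p) with hc
  have hc0 : 0 < c := lt_min hp (by linarith)
  have hCg0 : 0 ≤ Cg := le_trans (abs_nonneg _) (hCg (fun _ => true))
  have hmart := Mart_martingale μ hX hstep hp hp1 hmc' hgeq hCg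
  set R : NNReal := ⟨1 + 2*Cg, by linarith⟩ with hR
  have hbdd : ∀ᵐ ω ∂μ, ∀ i, |Mart X L g (i+1) ω - Mart X L g i ω| ≤ (R:ℝ) := by
    filter_upwards [hstep] with ω hω i
    have h1 : X (L+(i+1)) ω = X (L+i) ω + 1 ∨ X (L+(i+1)) ω = X (L+i) ω - 1 := by
      rw [show L + (i+1) = L+i+1 from by omega]
      exact hω (L+i)
    have h2 := abs_le.mp (hCg (wbit L (fun j => X j ω) (i+1)))
    have h3 := abs_le.mp (hCg (wbit L (fun j => X j ω) i))
    have hcoe : (R:ℝ) = 1 + 2*Cg := rfl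
    rw [hcoe]
    unfold Mart
    rcases h1 with h | h <;> rw [h, abs_le] <;> constructor <;> push_cast <;> linarith
  have hdich := hmart.bddAbove_range_iff_bddBelow_range hbdd
  -- the Borel-Cantelli upgrade: visits to K imply visits to K+1
  have hsmeas : ∀ (K : ℤ) (n : ℕ), MeasurableSet[(wfilt X hX) n] {ω | X n ω = K} := by
    intro K n
    have heq : {ω | X n ω = K} = histF X n ⁻¹' {v : ℕ → ℤ | v n = K} := by
      ext ω
      constructor
      · intro hω
        show X (min n n) ω = K
        rwa [min_self]
      · intro hω
        have h2 : X (min n n) ω = K := hω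
        rwa [min_self] at h2
    rw [heq]
    exact measurableSet_filt _ _
  have hE3 : ∀ᵐ ω ∂μ, ∀ K : ℤ,
      ({n | X n ω = K}.Infinite → {n | X n ω = K+1}.Infinite) := by
    rw [ae_all_iff]
    intro K
    have hlevy := ae_mem_limsup_atTop_iff μ (fun n => hsmeas (K+1) n)
    have hlb : ∀ᵐ ω ∂μ, ∀ k : ℕ,
        c * ({ω' | X k ω' = K}).indicator (1:Ω→ℝ) ω
          ≤ (μ[({ω' | X (k+1) ω' = K + 1}).indicator (1:Ω→ℝ) | (wfilt X hX) k]) ω :=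
      ae_all_iff.mpr (fun k => condexp_lb μ hX hp hp1 hmc' k K)
    filter_upwards [hlevy, hlb] with ω hω1 hω2 hinf
    have hcount := count_tendsto hinf
    have hmul := hcount.const_mul_atTop hc0
    have htend : Tendsto (fun n => ∑ k ∈ Finset.range n,
        (μ[({ω' | X (k+1) ω' = K + 1}).indicator (1:Ω→ℝ) | (wfilt X hX) k]) ω)
        atTop atTop := by
      apply tendsto_atTop_mono _ hmul
      intro n
      rw [Finset.mul_sum]
      apply Finset.sum_le_sum
      intro k _
      have hk := hω2 k
      by_cases hm : X k ω = K
      · rw [if_pos hm]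
        rw [Set.indicator_of_mem (show ω ∈ {ω' | X k ω' = K} from hm)] at hk
        simpa using hk
      · rw [if_neg hm]
        rw [Set.indicator_of_notMem (show ω ∉ {ω' | X k ω' = K} from hm)] at hk
        simpa using hk
    have hlim : ω ∈ limsup (fun n => {ω' | X n ω' = K+1}) atTop := hω1.mpr htend
    rw [mem_limsup_iff_frequently_mem] at hlim
    exact Nat.frequently_atTop_iff_infinite.mp hlim
  -- main pointwise argument
  filter_upwards [hdich, hE3, hstep] with ω hdw hE3w hstepw
  by_cases hBA : BddAbove (Set.range fun n => Mart X L g n ω)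
  · -- the walk is bounded: contradiction via hE3
    have hBB : BddBelow (Set.range fun n => Mart X L g n ω) := hdw.mp hBA
    obtain ⟨bU, hbU⟩ := hBA
    obtain ⟨bL, hbL⟩ := hBB
    have key : ∀ n, ((X n ω - X 0 ω : ℤ) : ℝ) ≤ max (L:ℝ) (bU + Cg)
        ∧ min (-(L:ℝ)) (bL - Cg) ≤ ((X n ω - X 0 ω : ℤ) : ℝ) := by
      intro n
      rcases Nat.lt_or_ge n L with hn | hn
      · have h1 := abs_sub_le_of_steps hstepw n
        have h1r : |((X n ω - X 0 ω : ℤ) : ℝ)| ≤ (n : ℝ) := by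
          rw [← Int.cast_abs]
          exact_mod_cast h1
        have h1' := abs_le.mp h1r
        have hnL : (n:ℝ) ≤ (L:ℝ) := by exact_mod_cast Nat.le_of_lt hn
        constructor
        · refine le_trans ?_ (le_max_left (L:ℝ) (bU + Cg))
          linarith [h1'.2]
        · refine le_trans (min_le_left (-(L:ℝ)) (bL - Cg)) ?_
          linarith [h1'.1]
      · set k := n - L with hkdef
        have hk : n = L + k := by omega
        have h1 : bL ≤ Mart X L g k ω := hbL ⟨k, rfl⟩
        have h2 : Mart X L g k ω ≤ bU := hbU ⟨k, rfl⟩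
        have h3 := abs_le.mp (hCg (wbit L (fun j => X j ω) k))
        unfold Mart at h1 h2
        rw [← hk] at h1 h2
        constructor
        · refine le_trans ?_ (le_max_right (L:ℝ) (bU + Cg))
          linarith
        · refine le_trans (min_le_right (-(L:ℝ)) (bL - Cg)) ?_
          linarith
    set Bu : ℤ := X 0 ω + ⌈max (L:ℝ) (bU + Cg)⌉ with hBu
    set Bl : ℤ := X 0 ω + ⌊min (-(L:ℝ)) (bL - Cg)⌋ with hBl
    have hbounds : ∀ n, Bl ≤ X n ω ∧ X n ω ≤ Bu := by
      intro n
      obtain ⟨k1, k2⟩ := key n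
      constructor
      · have hfl : ((⌊min (-(L:ℝ)) (bL - Cg)⌋ : ℤ) : ℝ) ≤ min (-(L:ℝ)) (bL - Cg) :=
          Int.floor_le _
        have hcast : ((Bl : ℤ) : ℝ) ≤ ((X n ω : ℤ) : ℝ) := by
          rw [hBl]
          push_cast
          push_cast at k2
          linarith
        exact_mod_cast hcast
      · have hce : max (L:ℝ) (bU + Cg) ≤ ((⌈max (L:ℝ) (bU + Cg)⌉ : ℤ) : ℝ) :=
          Int.le_ceil _
        have hcast : ((X n ω : ℤ) : ℝ) ≤ ((Bu : ℤ) : ℝ) := by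
          rw [hBu]
          push_cast
          push_cast at k1
          linarith
        exact_mod_cast hcast
    obtain ⟨j, hj1, hj2⟩ := pigeon (fun n => X n ω) Bu Bl (fun n => hbounds n)
    exact absurd (hE3w j hj1) hj2
  · -- the walk oscillates: crossing argument
    have hBB : ¬ BddBelow (Set.range fun n => Mart X L g n ω) := fun h => hBA (hdw.mpr h)
    apply crossing (fun n => X n ω) hstepw
    · intro b
      rw [not_bddAbove_iff] at hBA
      obtain ⟨y, ⟨k, hk⟩, hy⟩ := hBA (((b - X 0 ω : ℤ) : ℝ) + Cg)
      refine ⟨L+k, ?_⟩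
      have h3 := abs_le.mp (hCg (wbit L (fun j => X j ω) k))
      rw [← hk] at hy
      unfold Mart at hy
      have hlt : ((b - X 0 ω : ℤ) : ℝ) < ((X (L+k) ω - X 0 ω : ℤ) : ℝ) := by
        push_cast
        push_cast at hy
        linarith
      have hint : (b - X 0 ω : ℤ) < X (L+k) ω - X 0 ω := by exact_mod_cast hlt
      omega
    · intro b
      rw [not_bddBelow_iff] at hBB
      obtain ⟨y, ⟨k, hk⟩, hy⟩ := hBB (((b - X 0 ω : ℤ) : ℝ) - Cg)
      refine ⟨L+k, ?_⟩
      have h3 := abs_le.mp (hCg (wbit L (fun j => X j ω) k))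
      rw [← hk] at hy
      unfold Mart at hy
      have hlt : ((X (L+k) ω - X 0 ω : ℤ) : ℝ) < ((b - X 0 ω : ℤ) : ℝ) := by
        push_cast
        push_cast at hy
        linarith
      have hint : X (L+k) ω - X 0 ω < (b - X 0 ω : ℤ) := by exact_mod_cast hlt
      omega
end
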